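/- Let K be a field and f(x) a doubly monic polynomial of degree n over K (i.e., monic with constant term (−1)^n). Let f*(x) be the signed reciprocal polynomial defined by f*(t) = (−1)^n t^n f(t^{-1}). Then for any k with 1 ≤ k ≤ ⌊n/2⌋, f is k-regular over K if and only if f* is k-regular over K. -/

import Mathlib

open Polynomial

/-- `f` is `k`-regular over `K`: no product of `k` roots of `f` (with distinct
indices, counting multiplicity) in an algebraic closure of `K` equals `1`. -/
def kRegular (K : Type*) [Field K] (f : Polynomial K) (k : ℕ) : Prop :=
  ∀ s : Multiset (AlgebraicClosure K),
    s ≤ (f.map (algebraMap K (AlgebraicClosure K))).roots →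
    Multiset.card s = k → s.prod ≠ 1

/-- The signed reciprocal polynomial `f*(t) = (-1)^n t^n f(t⁻¹)` of a (doubly monic)
polynomial of degree `n`. -/
noncomputable def signedReciprocal {R : Type*} [CommRing R] (f : Polynomial R) : Polynomial R :=
  (-1 : Polynomial R) ^ f.natDegree * f.reverse

lemma reverse_X_sub_C' {F : Type*} [Field F] (a : F) (ha : a ≠ 0) :
    (X - C a).reverse = (-C a) * (X - C a⁻¹) := by
  have h1 : (X - C a).natDegree = 1 := natDegree_X_sub_C a
  rw [reverse, h1, reflect_sub, reflect_C, ← pow_one (X : F[X]), reflect_monomial]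
  simp [revAt_le]
  rw [mul_sub, ← C_mul, mul_inv_cancel₀ ha, map_one]
  ring

lemma reverse_multiset_prod' {F : Type*} [Field F] (s : Multiset F[X]) :
    s.prod.reverse = (s.map Polynomial.reverse).prod := by
  induction s using Multiset.induction with
  | empty =>
    show Polynomial.reverse (1 : F[X]) = 1
    rw [← C_1, Polynomial.reverse, natDegree_C, reflect_C, pow_zero, mul_one]
  | cons a s ih => simp [reverse_mul_of_domain, ih]

lemma roots_signedReciprocal {F : Type*} [Field F] [IsAlgClosed F] (g : Polynomial F)
    (hg : g.Monic) (h0 : g.coeff 0 = (-1) ^ g.natDegree) :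
    (signedReciprocal g).roots = g.roots.map (·⁻¹) := by
  have hsplit : g.Splits := IsAlgClosed.splits g
  have hsq : ((-1 : F) ^ g.natDegree) * ((-1 : F) ^ g.natDegree) = 1 := by
    rw [← pow_add]; exact Even.neg_one_pow ⟨g.natDegree, rfl⟩
  have hprod : g.roots.prod = 1 := by
    have h := hsplit.coeff_zero_eq_prod_roots_of_monic hg
    rw [h0] at h
    have := congrArg (fun x => ((-1 : F) ^ g.natDegree) * x) h
    simpa [← mul_assoc, hsq] using this.symm
  have hne : ∀ a ∈ g.roots, a ≠ 0 := by
    intro a ha ha0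
    rw [ha0] at ha
    have h1 : g.eval 0 = 0 := isRoot_of_mem_roots ha
    rw [← coeff_zero_eq_eval_zero, h0] at h1
    exact pow_ne_zero _ (by norm_num : (-1 : F) ≠ 0) h1
  have heq : g = (g.roots.map fun a => X - C a).prod :=
    hsplit.eq_prod_roots_of_monic hg
  -- compute reverse g
  have hrev : g.reverse = C ((-1) ^ g.natDegree) * ((g.roots.map (·⁻¹)).map fun a => X - C a).prod := by
    conv_lhs => rw [heq]
    rw [reverse_multiset_prod', Multiset.map_map]
    have h1 : g.roots.map (Polynomial.reverse ∘ fun a => X - C a)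
        = g.roots.map (fun a => (-C a) * (X - C a⁻¹)) :=
      Multiset.map_congr rfl fun a ha => reverse_X_sub_C' a (hne a ha)
    rw [h1, Multiset.prod_map_mul]
    congr 1
    · have h2 : g.roots.map (fun a => -C a) = (g.roots.map Neg.neg).map C := by
        rw [Multiset.map_map]
        exact Multiset.map_congr rfl fun a _ => (map_neg C a).symm
      rw [h2, ← map_multiset_prod, Multiset.prod_map_neg, hprod,
        (splits_iff_card_roots).1 hsplit, mul_one]
    · rw [Multiset.map_map]
      rfl
  have hsr : signedReciprocal g = ((g.roots.map (·⁻¹)).map fun a => X - C a).prod := by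
    rw [signedReciprocal, hrev, ← mul_assoc]
    have hC : ((-1 : F[X]) ^ g.natDegree) = C ((-1 : F) ^ g.natDegree) := by
      rw [map_pow, map_neg, map_one]
    rw [hC, ← map_mul, hsq, map_one, one_mul]
  rw [hsr, roots_multiset_prod_X_sub_C]

theorem kRegular_iff_signedReciprocal {K : Type*} [Field K] (f : Polynomial K) (n : ℕ)
    (hmonic : f.Monic) (hdeg : f.natDegree = n) (hdm : f.coeff 0 = (-1) ^ n)
    (k : ℕ) (hk1 : 1 ≤ k) (hk2 : k ≤ n / 2) :
    kRegular K f k ↔ kRegular K (signedReciprocal f) k := by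
  set φ := algebraMap K (AlgebraicClosure K)
  set g := f.map φ with hgdef
  have hginj : Function.Injective φ := φ.injective
  have hgmonic : g.Monic := hmonic.map φ
  have hgdeg : g.natDegree = f.natDegree := natDegree_map_eq_of_injective hginj f
  have hg0 : g.coeff 0 = (-1) ^ g.natDegree := by
    rw [coeff_map, hdm, hgdeg, hdeg, map_pow, map_neg, map_one]
  have hmap : (signedReciprocal f).map φ = signedReciprocal g := by
    rw [signedReciprocal, signedReciprocal, Polynomial.map_mul, Polynomial.map_pow,
      Polynomial.map_neg, Polynomial.map_one, hgdeg]
    congr 1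
    rw [reverse, reverse, ← reflect_map, hgdeg]
  have hroots : ((signedReciprocal f).map φ).roots = g.roots.map (·⁻¹) := by
    rw [hmap]; exact roots_signedReciprocal g hgmonic hg0
  constructor
  · intro h s hs hcard
    rw [hroots] at hs
    have hs' : s.map (·⁻¹) ≤ g.roots := by
      have := Multiset.map_le_map (f := (·⁻¹)) hs
      rwa [Multiset.map_map, show ((·⁻¹) ∘ (·⁻¹) : AlgebraicClosure K → _) = id from
        funext fun x => inv_inv x, Multiset.map_id] at this
    have := h (s.map (·⁻¹)) hs' (by simpa using hcard)
    intro hcon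
    apply this
    rw [Multiset.prod_map_inv, Multiset.map_id', hcon, inv_one]
  · intro h s hs hcard
    have hs' : s.map (·⁻¹) ≤ ((signedReciprocal f).map φ).roots := by
      rw [hroots]
      exact Multiset.map_le_map hs
    have := h (s.map (·⁻¹)) hs' (by simpa using hcard)
    intro hcon
    apply this
    rw [Multiset.prod_map_inv, Multiset.map_id', hcon, inv_one]
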